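/- Let K be an origin-symmetric star body in the hemisphere S²₊ with radial function ρ_K : S¹ → (0, π/2]. Then ∫_{S¹} (2ρ_K(ξ))² dξ ≥ 8π·arccos²(1 − vol(K)/(2π)), where vol(K) = ∫_{S¹}(1 − cos ρ_K(u)) du, with equality if and only if ρ_K is constant. -/

import Mathlib

open Real


private lemma sinc_strictAntiOn : StrictAntiOn (fun x => Real.sin x / x) (Set.Ioc 0 (π/2)) := by
  apply strictAntiOn_of_deriv_neg (convex_Ioc 0 (π/2))
  · exact Real.continuous_sin.continuousOn.div continuousOn_id fun x hx => ne_of_gt hx.1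
  · intro x hx
    rw [interior_Ioc] at hx
    have hx0 : 0 < x := hx.1
    have hderiv : HasDerivAt (fun x => Real.sin x / x)
        ((Real.cos x * x - Real.sin x * 1) / x ^ 2) x :=
      (Real.hasDerivAt_sin x).div (hasDerivAt_id x) hx0.ne'
    rw [hderiv.deriv]
    apply div_neg_of_neg_of_pos _ (by positivity)
    have hcos : 0 < Real.cos x := Real.cos_pos_of_mem_Ioo ⟨by linarith [Real.pi_pos], hx.2⟩
    have htan : x < Real.tan x := Real.lt_tan hx0 hx.2
    rw [Real.tan_eq_sin_div_cos, lt_div_iff₀ hcos] at htan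
    nlinarith

private lemma key_lt {A x : ℝ} (hA : A ∈ Set.Ioc 0 (π/2)) (hx : x ∈ Set.Ioc 0 (π/2))
    (hne : x ≠ A) :
    A ^ 2 + (2 * A / Real.sin A) * Real.cos A
      < x ^ 2 + (2 * A / Real.sin A) * Real.cos x := by
  have hπ := Real.pi_pos
  have hsinA : 0 < Real.sin A := Real.sin_pos_of_pos_of_lt_pi hA.1 (by linarith [hA.2])
  set c := 2 * A / Real.sin A with hc
  set g : ℝ → ℝ := fun y => y ^ 2 + c * Real.cos y with hg
  have hgc : Continuous g := by continuity
  have hderiv : ∀ y : ℝ, HasDerivAt g (2 * y - c * Real.sin y) y := by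
    intro y
    have h1 : HasDerivAt (fun y : ℝ => y ^ 2) (2 * y) y := by
      simpa using hasDerivAt_pow 2 y
    have h2 : HasDerivAt (fun y : ℝ => c * Real.cos y) (c * (-Real.sin y)) y :=
      (Real.hasDerivAt_cos y).const_mul c
    have h3 := h1.add h2
    rw [hg]
    rw [show 2 * y - c * Real.sin y = 2 * y + c * -Real.sin y by ring]
    exact h3
  -- derivative negative below A, positive above
  have hkey : ∀ y ∈ Set.Ioc 0 (π/2), y ≠ A → (y < A → 2 * y - c * Real.sin y < 0)
      ∧ (A < y → 0 < 2 * y - c * Real.sin y) := by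
    intro y hy hyne
    have hsiny : 0 < Real.sin y := Real.sin_pos_of_pos_of_lt_pi hy.1 (by linarith [hy.2])
    constructor
    · intro hlt
      have := sinc_strictAntiOn hy hA hlt
      simp only [div_lt_div_iff₀ hA.1 hy.1] at this
      rw [hc, sub_neg, div_mul_eq_mul_div, lt_div_iff₀ hsinA]
      nlinarith
    · intro hlt
      have := sinc_strictAntiOn hA hy hlt
      simp only [div_lt_div_iff₀ hy.1 hA.1] at this
      rw [hc, sub_pos, div_mul_eq_mul_div, div_lt_iff₀ hsinA]
      nlinarith
  rcases lt_or_gt_of_ne hne with hlt | hgt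
  · have hanti : StrictAntiOn g (Set.Icc 0 A) := by
      apply strictAntiOn_of_deriv_neg (convex_Icc 0 A) hgc.continuousOn
      intro y hy
      rw [interior_Icc] at hy
      rw [(hderiv y).deriv]
      exact (hkey y ⟨hy.1, le_trans hy.2.le hA.2⟩ hy.2.ne).1 hy.2
    exact hanti ⟨hx.1.le, hlt.le⟩ ⟨hA.1.le, le_refl A⟩ hlt
  · have hmono : StrictMonoOn g (Set.Icc A (π/2)) := by
      apply strictMonoOn_of_deriv_pos (convex_Icc A (π/2)) hgc.continuousOn
      intro y hy
      rw [interior_Icc] at hy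
      rw [(hderiv y).deriv]
      exact (hkey y ⟨lt_trans hA.1 hy.1, hy.2.le⟩ hy.1.ne').2 hy.1
    exact hmono ⟨le_refl A, hA.2⟩ ⟨hgt.le, hx.2⟩ hgt

/-- For an origin-symmetric star body in `S²₊` with radial function `ρ : S¹ → (0, π/2]`
(modeled as a continuous `π`-periodic function on `ℝ`, the circle parametrized by angle),
`∫_{S¹} (2ρ)² ≥ 8π·arccos²(1 − vol(K)/(2π))` where `vol(K) = ∫_{S¹}(1 − cos ρ)`,
with equality iff `ρ` is constant (i.e. `K` is a centered ball). -/
theorem stmt14 (ρ : ℝ → ℝ) (hρc : Continuous ρ)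
    (hρr : ∀ θ, ρ θ ∈ Set.Ioc 0 (π / 2))
    (hsym : ∀ θ, ρ (θ + π) = ρ θ)
    (vol : ℝ) (hvol : vol = ∫ θ in (0:ℝ)..(2 * π), (1 - Real.cos (ρ θ))) :
    (∫ θ in (0:ℝ)..(2 * π), (2 * ρ θ) ^ 2) ≥
        8 * π * (Real.arccos (1 - vol / (2 * π))) ^ 2 ∧
      ((∫ θ in (0:ℝ)..(2 * π), (2 * ρ θ) ^ 2) =
          8 * π * (Real.arccos (1 - vol / (2 * π))) ^ 2 ↔ ∃ c, ∀ θ, ρ θ = c) := by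
  have hπ : 0 < π := Real.pi_pos
  have h2π : (0:ℝ) < 2 * π := by linarith
  -- basic integrability
  have hicos : IntervalIntegrable (fun θ => Real.cos (ρ θ)) MeasureTheory.volume 0 (2*π) :=
    (Real.continuous_cos.comp hρc).intervalIntegrable _ _
  have hione : IntervalIntegrable (fun _ : ℝ => (1:ℝ)) MeasureTheory.volume 0 (2*π) :=
    intervalIntegrable_const
  -- vol bounds
  have hvol_pos : 0 < vol := by
    rw [hvol]
    apply intervalIntegral.intervalIntegral_pos_of_pos_on
      (intervalIntegrable_const.sub hicos)
    · intro x hx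
      have h := hρr x
      have : Real.cos (ρ x) < 1 := by
        calc Real.cos (ρ x) < Real.cos 0 :=
          Real.strictAntiOn_cos ⟨le_refl 0, hπ.le⟩ ⟨h.1.le, by linarith [h.2]⟩ h.1
        _ = 1 := Real.cos_zero
      linarith
    · exact h2π
  have hvol_le : vol ≤ 2 * π := by
    rw [hvol]
    calc (∫ θ in (0:ℝ)..(2*π), (1 - Real.cos (ρ θ)))
        ≤ ∫ _ in (0:ℝ)..(2*π), (1:ℝ) := by
          apply intervalIntegral.integral_mono_on h2π.le (hione.sub hicos) hione
          intro x _
          have h := hρr x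
          have : 0 ≤ Real.cos (ρ x) :=
            Real.cos_nonneg_of_mem_Icc ⟨by linarith [h.1], h.2⟩
          linarith
      _ = 2 * π := by simp
  set m := 1 - vol / (2 * π) with hm
  have hm0 : 0 ≤ m := by rw [hm]; rw [sub_nonneg, div_le_one h2π]; exact hvol_le
  have hm1 : m < 1 := by
    rw [hm]; have : 0 < vol / (2 * π) := div_pos hvol_pos h2π; linarith
  set A := Real.arccos m with hA
  have hA0 : 0 < A := Real.arccos_pos.mpr hm1
  have hA2 : A ≤ π / 2 := Real.arccos_le_pi_div_two.mpr hm0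
  have hcosA : Real.cos A = m := Real.cos_arccos (by linarith) (by linarith)
  have hsinA : 0 < Real.sin A := Real.sin_pos_of_pos_of_lt_pi hA0 (by linarith)
  set c := 2 * A / Real.sin A with hc
  -- integral of cos ρ
  have hcosint : (∫ θ in (0:ℝ)..(2*π), Real.cos (ρ θ)) = 2 * π * m := by
    have h1 : (∫ θ in (0:ℝ)..(2*π), (1 - Real.cos (ρ θ)))
        = (∫ _ in (0:ℝ)..(2*π), (1:ℝ)) - ∫ θ in (0:ℝ)..(2*π), Real.cos (ρ θ) :=
      intervalIntegral.integral_sub hione hicos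
    have h2 : (∫ _ in (0:ℝ)..(2*π), (1:ℝ)) = 2 * π := by simp
    rw [h2] at h1
    rw [hm]
    field_simp
    linarith [hvol.trans h1]
  -- pointwise bound
  have hptwise : ∀ θ : ℝ, A ^ 2 + c * (m - Real.cos (ρ θ)) ≤ (ρ θ) ^ 2 := by
    intro θ
    rcases eq_or_ne (ρ θ) A with h | h
    · rw [h, hcosA]; simp
    · have := key_lt ⟨hA0, hA2⟩ (hρr θ) h
      rw [hcosA] at this
      rw [hc]
      nlinarith [this]
  -- pointwise strict if ρ θ ≠ A
  have hptstrict : ∀ θ : ℝ, ρ θ ≠ A → A ^ 2 + c * (m - Real.cos (ρ θ)) < (ρ θ) ^ 2 := by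
    intro θ h
    have := key_lt ⟨hA0, hA2⟩ (hρr θ) h
    rw [hcosA] at this
    rw [hc]
    nlinarith [this]
  -- integral of the lower-bound function
  have hlowint : (∫ θ in (0:ℝ)..(2*π), (A ^ 2 + c * (m - Real.cos (ρ θ))))
      = 2 * π * A ^ 2 := by
    rw [intervalIntegral.integral_add intervalIntegrable_const
        ((intervalIntegrable_const.sub hicos).const_mul c),
      intervalIntegral.integral_const_mul,
      intervalIntegral.integral_sub intervalIntegrable_const hicos,
      intervalIntegral.integral_const, intervalIntegral.integral_const, hcosint]
    simp only [smul_eq_mul, sub_zero]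
    ring
  have hiρ2 : IntervalIntegrable (fun θ => (ρ θ) ^ 2) MeasureTheory.volume 0 (2*π) :=
    (hρc.pow 2).intervalIntegrable _ _
  have hρ2int : (∫ θ in (0:ℝ)..(2*π), (2 * ρ θ) ^ 2)
      = 4 * ∫ θ in (0:ℝ)..(2*π), (ρ θ) ^ 2 := by
    rw [← intervalIntegral.integral_const_mul]
    congr 1; ext θ; ring
  -- main inequality
  have hmain : 2 * π * A ^ 2 ≤ ∫ θ in (0:ℝ)..(2*π), (ρ θ) ^ 2 := by
    rw [← hlowint]
    apply intervalIntegral.integral_mono_on h2π.le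
      (intervalIntegrable_const.add ((intervalIntegrable_const.sub hicos).const_mul c)) hiρ2
    exact fun x _ => hptwise x
  constructor
  · rw [ge_iff_le, hρ2int]
    nlinarith [hmain]
  constructor
  · -- equality implies constant
    intro heq
    by_contra hcon
    push_neg at hcon
    obtain ⟨θ0, hθ0⟩ := hcon A
    have hper : Function.Periodic ρ π := hsym
    obtain ⟨θ1, hθ1, hρeq⟩ := hper.exists_mem_Ico₀ hπ θ0
    have hθ1ne : ρ θ1 ≠ A := by rw [← hρeq]; exact hθ0
    have hstrict : (∫ θ in (0:ℝ)..(2*π), (A ^ 2 + c * (m - Real.cos (ρ θ))))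
        < ∫ θ in (0:ℝ)..(2*π), (ρ θ) ^ 2 := by
      apply intervalIntegral.integral_lt_integral_of_continuousOn_of_le_of_exists_lt h2π
      · exact (continuous_const.add (continuous_const.mul
          (continuous_const.sub (Real.continuous_cos.comp hρc)))).continuousOn
      · exact (hρc.pow 2).continuousOn
      · exact fun x _ => hptwise x
      · exact ⟨θ1, ⟨hθ1.1, by linarith [hθ1.2]⟩, hptstrict θ1 hθ1ne⟩
    rw [hlowint] at hstrict
    rw [hρ2int] at heq
    nlinarith
  · -- constant implies equality
    rintro ⟨k, hk⟩
    have hk0 : k ∈ Set.Ioc 0 (π / 2) := hk 0 ▸ hρr 0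
    have hvolk : vol = 2 * π * (1 - Real.cos k) := by
      rw [hvol]
      simp only [hk]
      rw [intervalIntegral.integral_const]
      simp only [smul_eq_mul, sub_zero]
    have hmk : m = Real.cos k := by rw [hm, hvolk]; field_simp; ring
    have hAk : A = k := by
      rw [hA, hmk, Real.arccos_cos hk0.1.le (by linarith [hk0.2])]
    simp only [hk]
    rw [intervalIntegral.integral_const]
    simp only [smul_eq_mul, sub_zero]
    rw [hAk]
    ring
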